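/- For any prime p ≥ 5 and any positive integer r, the sum ∑_{n=0}^{rp-1} binomial(2n, n) is congruent to α_r modulo p^2 if p ≡ 1 (mod 3), and congruent to -α_r modulo p^2 if p ≡ 2 (mod 3), where α_r = ∑_{n=0}^{r-1} binomial(2n, n). -/
import Mathlib

open Finset

private def chi (d : ℕ) : ℤ := if d % 3 = 1 then 1 else if d % 3 = 2 then -1 else 0

private lemma chi_eq_of_mod {a b : ℕ} (h : a % 3 = b % 3) : chi a = chi b := by
  simp [chi, h]

private lemma chi_sum3 (n : ℕ) : chi n + chi (n+1) + chi (n+2) = 0 := by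
  have h : n % 3 = 0 ∨ n % 3 = 1 ∨ n % 3 = 2 := by omega
  have h1 : (n+1) % 3 = (n % 3 + 1) % 3 := by omega
  have h2 : (n+2) % 3 = (n % 3 + 2) % 3 := by omega
  rcases h with h | h | h <;> simp [chi, h1, h2, h]

private lemma chi_mul (a b : ℕ) : chi (a * b) = chi a * chi b := by
  have h : a % 3 = 0 ∨ a % 3 = 1 ∨ a % 3 = 2 := by omega
  have h' : b % 3 = 0 ∨ b % 3 = 1 ∨ b % 3 = 2 := by omega
  have hm : (a*b) % 3 = (a % 3 * (b % 3)) % 3 := Nat.mul_mod a b 3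
  rcases h with h | h | h <;> rcases h' with h' | h' | h' <;>
    simp [chi, hm, h, h']

private lemma chi_zero : chi 0 = 0 := rfl
private lemma chi_one : chi 1 = 1 := rfl

/-- Key identity: partial sums of central binomials as χ-weighted sum of binomials. -/
private lemma sumS (N : ℕ) :
    (∑ n ∈ range N, ((2*n).choose n : ℤ)) =
      ∑ d ∈ range (N+1), chi d * ((2*N).choose (N+d) : ℤ) := by
  induction N with
  | zero => simp [chi]
  | succ N ih =>
    rw [Finset.sum_range_succ, ih]
    have pascal2 : ∀ a b : ℕ, (a+2).choose (b+2)
        = a.choose b + 2 * a.choose (b+1) + a.choose (b+2) := by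
      intro a b
      rw [Nat.choose_succ_succ (a+1) (b+1), Nat.choose_succ_succ a b,
        Nat.choose_succ_succ a (b+1)]
      ring
    have hL : ∑ d ∈ range (N+2), chi d * ((2*(N+1)).choose ((N+1)+d) : ℤ)
        = ∑ j ∈ range (N+1), chi (j+1) * ((2*N+2).choose (N+2+j) : ℤ) := by
      rw [Finset.sum_range_succ' (fun d => chi d * ((2*(N+1)).choose ((N+1)+d) : ℤ)) (N+1)]
      simp only [chi_zero, Int.zero_mul, add_zero, zero_mul]
      apply Finset.sum_congr rfl
      intro j _
      have e1 : 2*(N+1) = 2*N+2 := by ring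
      have e2 : N+1+(j+1) = N+2+j := by omega
      rw [e1, e2]
    rw [hL]
    have hsplit : ∀ j : ℕ, ((2*N+2).choose (N+2+j) : ℤ)
        = ((2*N).choose (N+j) : ℤ) + 2 * ((2*N).choose (N+1+j) : ℤ)
          + ((2*N).choose (N+2+j) : ℤ) := by
      intro j
      have h := pascal2 (2*N) (N+j)
      have e1 : N+j+2 = N+2+j := by omega
      have e2 : N+j+1 = N+1+j := by omega
      rw [e1, e2] at h
      exact_mod_cast congrArg (Nat.cast : ℕ → ℤ) h
    have expand : ∑ j ∈ range (N+1), chi (j+1) * ((2*N+2).choose (N+2+j) : ℤ)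
        = (∑ j ∈ range (N+1), chi (j+1) * ((2*N).choose (N+j) : ℤ))
          + (∑ j ∈ range (N+1), chi (j+1) * (2 * ((2*N).choose (N+1+j) : ℤ)))
          + ∑ j ∈ range (N+1), chi (j+1) * ((2*N).choose (N+2+j) : ℤ) := by
      rw [← Finset.sum_add_distrib, ← Finset.sum_add_distrib]
      apply Finset.sum_congr rfl
      intro j _
      rw [hsplit j]; ring
    rw [expand]
    -- S2 rebased
    have hS2 : ∑ j ∈ range (N+1), chi (j+1) * (2 * ((2*N).choose (N+1+j) : ℤ))
        = ∑ e ∈ range (N+1), chi e * (2 * ((2*N).choose (N+e) : ℤ)) := by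
      have h1 := Finset.sum_range_succ' (fun e => chi e * (2 * ((2*N).choose (N+e) : ℤ))) (N+1)
      have h2 := Finset.sum_range_succ (fun e => chi e * (2 * ((2*N).choose (N+e) : ℤ))) (N+1)
      simp only [chi_zero, zero_mul, add_zero] at h1
      have h3 : (2*N).choose (N+(N+1)) = 0 := Nat.choose_eq_zero_of_lt (by omega)
      rw [h3] at h2
      simp only [Nat.cast_zero, mul_zero, add_zero] at h2
      have h4 : ∑ j ∈ range (N+1), chi (j+1) * (2 * ((2*N).choose (N+(j+1)) : ℤ))
          = ∑ j ∈ range (N+1), chi (j+1) * (2 * ((2*N).choose (N+1+j) : ℤ)) := by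
        apply Finset.sum_congr rfl
        intro j _
        have e2 : N+(j+1) = N+1+j := by omega
        rw [e2]
      rw [h4] at h1
      rw [← h1, h2]
    rw [hS2]
    -- S3 rebased
    have hS3 : ∑ j ∈ range (N+1), chi (j+1) * ((2*N).choose (N+2+j) : ℤ)
        = ∑ e ∈ range (N+1), (if 2 ≤ e then chi (e-1) else 0) * ((2*N).choose (N+e) : ℤ) := by
      have hbig1 : ∑ e ∈ range (N+3), (if 2 ≤ e then chi (e-1) else 0) * ((2*N).choose (N+e) : ℤ)
          = ∑ e ∈ range (N+1), (if 2 ≤ e then chi (e-1) else 0) * ((2*N).choose (N+e) : ℤ) := by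
        rw [Finset.sum_range_succ, Finset.sum_range_succ]
        have z1 : (2*N).choose (N+(N+2)) = 0 := Nat.choose_eq_zero_of_lt (by omega)
        have z2 : (2*N).choose (N+(N+1)) = 0 := Nat.choose_eq_zero_of_lt (by omega)
        rw [z1, z2]
        simp
      have hbig2 : ∑ e ∈ range (N+3), (if 2 ≤ e then chi (e-1) else 0) * ((2*N).choose (N+e) : ℤ)
          = ∑ j ∈ range (N+1), chi (j+1) * ((2*N).choose (N+2+j) : ℤ) := by
        rw [Finset.sum_range_succ' (fun e => (if 2 ≤ e then chi (e-1) else 0) * ((2*N).choose (N+e) : ℤ)) (N+2)]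
        rw [Finset.sum_range_succ' (fun k => (if 2 ≤ k+1 then chi (k+1-1) else 0) * ((2*N).choose (N+(k+1)) : ℤ)) (N+1)]
        have hz1 : (if 2 ≤ (0:ℕ) then chi (0-1) else 0) * ((2*N).choose (N+0) : ℤ) = 0 := by
          norm_num
        have hz2 : (if 2 ≤ (0:ℕ)+1 then chi (0+1-1) else 0) * ((2*N).choose (N+(0+1)) : ℤ) = 0 := by
          norm_num
        rw [hz1, hz2, add_zero, add_zero]
        apply Finset.sum_congr rfl
        intro j _
        rw [if_pos (by omega : 2 ≤ j+1+1)]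
        have e1 : N+(j+1+1) = N+2+j := by omega
        have e2 : j+1+1-1 = j+1 := by omega
        rw [e1, e2]
      rw [← hbig2, hbig1]
    rw [hS3]
    rw [← Finset.sum_add_distrib, ← Finset.sum_add_distrib]
    -- now a single sum; compare with RHS = S2-style sum + central term
    have final : ∑ e ∈ range (N+1),
        (chi (e+1) * ((2*N).choose (N+e) : ℤ) + chi e * (2 * ((2*N).choose (N+e) : ℤ))
          + (if 2 ≤ e then chi (e-1) else 0) * ((2*N).choose (N+e) : ℤ))
        = ∑ e ∈ range (N+1),
            (chi e * ((2*N).choose (N+e) : ℤ)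
              + (if e = 0 then 1 else 0) * ((2*N).choose (N+e) : ℤ)) := by
      apply Finset.sum_congr rfl
      intro e _
      have hc : chi (e+1) + chi e + (if 2 ≤ e then chi (e-1) else 0)
          = (if e = 0 then 1 else 0) := by
        obtain _|_|m := e
        · norm_num [chi]
        · norm_num [chi]
        · rw [if_pos (by omega : 2 ≤ m+2), if_neg (by omega : ¬ m+2 = 0)]
          have em : m+2-1 = m+1 := by omega
          rw [em]
          have h3 := chi_sum3 m
          have e3 : m+2+1 = m+1+2 := by omega
          have e4 : m+2 = m+1+1 := by omega
          rw [e3, e4]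
          linarith [chi_sum3 (m+1)]
      calc chi (e+1) * ((2*N).choose (N+e) : ℤ) + chi e * (2 * ((2*N).choose (N+e) : ℤ))
            + (if 2 ≤ e then chi (e-1) else 0) * ((2*N).choose (N+e) : ℤ)
          = (chi (e+1) + chi e + (if 2 ≤ e then chi (e-1) else 0)) * ((2*N).choose (N+e) : ℤ)
            + chi e * ((2*N).choose (N+e) : ℤ) := by ring
        _ = (if e = 0 then (1:ℤ) else 0) * ((2*N).choose (N+e) : ℤ)
            + chi e * ((2*N).choose (N+e) : ℤ) := by rw [hc]
        _ = chi e * ((2*N).choose (N+e) : ℤ) + (if e = 0 then 1 else 0) * ((2*N).choose (N+e) : ℤ) := by ring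
    rw [final, Finset.sum_add_distrib]
    have hone : ∑ e ∈ range (N+1), (if e = 0 then 1 else 0) * ((2*N).choose (N+e) : ℤ)
        = ((2*N).choose N : ℤ) := by
      rw [Finset.sum_eq_single_of_mem 0 (Finset.mem_range.mpr (by omega))]
      · simp
      · intro b _ hb; simp [hb]
    rw [hone]
/-- χ-weighted binomial sum. -/
private lemma chiBinom (m : ℕ) : ∀ c : ℕ,
    ∑ f ∈ range (m+1), chi (c+f) * (m.choose f : ℤ) = (-1)^m * chi (c + 2*m) := by
  induction m with
  | zero => intro c; simp
  | succ m ih =>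
    intro c
    have hstrip : ∑ f ∈ range (m+2), chi (c+f) * ((m+1).choose f : ℤ)
        = chi c + ∑ j ∈ range (m+1), chi (c+(j+1)) * ((m+1).choose (j+1) : ℤ) := by
      rw [Finset.sum_range_succ' (fun f => chi (c+f) * ((m+1).choose f : ℤ)) (m+1)]
      simp [add_comm]
    rw [hstrip]
    have hpas : ∀ j : ℕ, ((m+1).choose (j+1) : ℤ) = (m.choose j : ℤ) + (m.choose (j+1) : ℤ) := by
      intro j
      exact_mod_cast congrArg (Nat.cast : ℕ → ℤ) (Nat.choose_succ_succ m j)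
    have hexp : ∑ j ∈ range (m+1), chi (c+(j+1)) * ((m+1).choose (j+1) : ℤ)
        = (∑ j ∈ range (m+1), chi ((c+1)+j) * (m.choose j : ℤ))
          + ∑ j ∈ range (m+1), chi (c+(j+1)) * (m.choose (j+1) : ℤ) := by
      rw [← Finset.sum_add_distrib]
      apply Finset.sum_congr rfl
      intro j _
      rw [hpas j, show (c+1)+j = c+(j+1) from by omega]
      ring
    rw [hexp]
    have hback : chi c + ((∑ j ∈ range (m+1), chi ((c+1)+j) * (m.choose j : ℤ))
          + ∑ j ∈ range (m+1), chi (c+(j+1)) * (m.choose (j+1) : ℤ))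
        = (∑ j ∈ range (m+1), chi ((c+1)+j) * (m.choose j : ℤ))
          + ∑ f ∈ range (m+2), chi (c+f) * (m.choose f : ℤ) := by
      rw [Finset.sum_range_succ' (fun f => chi (c+f) * (m.choose f : ℤ)) (m+1)]
      simp [add_comm]
      ring
    rw [hback]
    have htop : ∑ f ∈ range (m+2), chi (c+f) * (m.choose f : ℤ)
        = ∑ f ∈ range (m+1), chi (c+f) * (m.choose f : ℤ) := by
      rw [Finset.sum_range_succ]
      rw [Nat.choose_eq_zero_of_lt (by omega : m < m+1)]
      simp
    rw [htop, ih (c+1), ih c]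
    have hkey : chi (c+2*m+1) + chi (c + 2*m) = -chi (c + 2*(m+1)) := by
      have := chi_sum3 (c+2*m)
      rw [show c+2*(m+1) = c+2*m+2 from by omega]
      linarith
    have : (-1:ℤ)^(m+1) = -(-1)^m := by ring
    rw [this]
    rw [show c+1+2*m = c+2*m+1 from by omega]
    linear_combination ((-1:ℤ)^m) * hkey


private lemma hdvd (p : ℕ) : p ∣ p^2 := ⟨p, (sq p)⟩

/-- If z reduces to 0 mod p, then p*z = 0 in ZMod p². -/
private lemma pz {p : ℕ} (hp : p.Prime) (z : ZMod (p^2))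
    (h : (ZMod.castHom (hdvd p) (ZMod p)) z = 0) : (p : ZMod (p^2)) * z = 0 := by
  haveI : NeZero (p^2) := ⟨pow_ne_zero 2 hp.ne_zero⟩
  have hz : z = ((z.val : ℕ) : ZMod (p^2)) := (ZMod.natCast_zmod_val z).symm
  have h2 : ((z.val : ℕ) : ZMod p) = 0 := by
    rw [hz] at h
    rwa [map_natCast] at h
  obtain ⟨k, hk⟩ := (ZMod.natCast_eq_zero_iff _ _).mp h2
  rw [hz, hk]
  push_cast
  rw [← mul_assoc, ← Nat.cast_mul, ← sq, ZMod.natCast_self]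
  exact zero_mul _

private lemma pmul_nat {p : ℕ} (hp : p.Prime) (a b : ℕ) (h : (a : ZMod p) = (b : ZMod p)) :
    (p : ZMod (p^2)) * (a : ZMod (p^2)) = (p : ZMod (p^2)) * (b : ZMod (p^2)) := by
  have h0 : (ZMod.castHom (hdvd p) (ZMod p)) ((a : ZMod (p^2)) - (b : ZMod (p^2))) = 0 := by
    rw [map_sub, map_natCast, map_natCast, h, sub_self]
  have := pz hp _ h0
  rw [mul_sub] at this
  linear_combination this

private lemma unit_of_red {p : ℕ} (hp : p.Prime) (x : ℕ) (h : (x : ZMod p) ≠ 0) :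
    IsUnit ((x : ℕ) : ZMod (p^2)) := by
  rw [ZMod.isUnit_iff_coprime]
  have hnd : ¬ p ∣ x := fun hd => h ((ZMod.natCast_eq_zero_iff _ _).mpr hd)
  have : Nat.Coprime x p := (Nat.coprime_comm.mp ((Nat.Prime.coprime_iff_not_dvd hp).mpr hnd))
  exact Nat.Coprime.pow_right 2 this

/-- Product expansion with a square-zero element. -/
private lemma prod_add_nilp {R : Type*} [CommRing R] (x : R) (hx : x * x = 0)
    (s : Finset ℕ) (a : ℕ → R) :
    ∏ j ∈ s, (a j + x) = (∏ j ∈ s, a j) + x * ∑ j ∈ s, ∏ i ∈ s.erase j, a i := by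
  induction s using Finset.induction_on with
  | empty => simp
  | @insert c s' hc ih =>
    rw [Finset.prod_insert hc, Finset.prod_insert hc, Finset.sum_insert hc, ih]
    rw [Finset.erase_insert hc]
    have hsum : ∑ j ∈ s', ∏ i ∈ (insert c s').erase j, a i
        = ∑ j ∈ s', a c * ∏ i ∈ s'.erase j, a i := by
      apply Finset.sum_congr rfl
      intro j hj
      have hne : j ≠ c := fun he => hc (he ▸ hj)
      rw [Finset.erase_insert_of_ne hne.symm, Finset.prod_insert (fun hmem => hc (Finset.mem_of_mem_erase hmem))]
    rw [hsum, ← Finset.mul_sum]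
    linear_combination (∑ j ∈ s', ∏ i ∈ s'.erase j, a i) * hx



private lemma sum_inv_zero {p : ℕ} (hp : p.Prime) (hp5 : 5 ≤ p) :
    ∑ j ∈ range (p-1), (((j+1 : ℕ)) : ZMod p)⁻¹ = 0 := by
  haveI : Fact p.Prime := ⟨hp⟩
  have hrefl := Finset.sum_range_reflect (fun j => (((j+1 : ℕ)) : ZMod p)⁻¹) (p-1)
  have hterm : ∀ j ∈ range (p-1), (((p-1-1-j+1 : ℕ)) : ZMod p)⁻¹ = -(((j+1 : ℕ)) : ZMod p)⁻¹ := by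
    intro j hj
    have hj' : j < p - 1 := Finset.mem_range.mp hj
    have e1 : p-1-1-j+1 = p-(j+1) := by omega
    rw [e1]
    have e2 : ((p-(j+1) : ℕ) : ZMod p) = -((j+1 : ℕ) : ZMod p) := by
      have hle : j+1 ≤ p := by omega
      rw [Nat.cast_sub hle, ZMod.natCast_self]
      ring
    rw [e2, inv_neg]
  rw [Finset.sum_congr rfl hterm] at hrefl
  have h2 : (2 : ZMod p) ≠ 0 := by
    have : ¬ (p ∣ 2) := fun hd => by have := Nat.le_of_dvd (by norm_num) hd; omega
    simpa using fun hh => this ((ZMod.natCast_eq_zero_iff 2 p).mp (by exact_mod_cast hh))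
  have hneg : ∑ x ∈ range (p-1), -(((x+1 : ℕ)) : ZMod p)⁻¹
      = -∑ x ∈ range (p-1), (((x+1 : ℕ)) : ZMod p)⁻¹ := by
    rw [Finset.sum_neg_distrib]
  rw [hneg] at hrefl
  have h22 : (2 : ZMod p) * ∑ j ∈ range (p-1), (((j+1 : ℕ)) : ZMod p)⁻¹ = 0 := by
    linear_combination -hrefl
  exact (mul_eq_zero.mp h22).resolve_left h2

private lemma Tbar_zero {p : ℕ} (hp : p.Prime) (hp5 : 5 ≤ p) :
    ∑ j ∈ range (p-1), ∏ i ∈ (range (p-1)).erase j, ((i+1 : ℕ) : ZMod p) = 0 := by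
  haveI : Fact p.Prime := ⟨hp⟩
  have hne : ∀ j ∈ range (p-1), ((j+1 : ℕ) : ZMod p) ≠ 0 := by
    intro j hj h0
    have := (ZMod.natCast_eq_zero_iff _ _).mp h0
    have := Nat.le_of_dvd (by omega) this
    have := Finset.mem_range.mp hj
    omega
  have hterm : ∀ j ∈ range (p-1), ∏ i ∈ (range (p-1)).erase j, ((i+1 : ℕ) : ZMod p)
      = (∏ i ∈ range (p-1), ((i+1 : ℕ) : ZMod p)) * ((j+1 : ℕ) : ZMod p)⁻¹ := by
    intro j hj
    have h1 : (∏ i ∈ (range (p-1)).erase j, ((i+1 : ℕ) : ZMod p)) * ((j+1 : ℕ) : ZMod p)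
        = ∏ i ∈ range (p-1), ((i+1 : ℕ) : ZMod p) :=
      Finset.prod_erase_mul (range (p-1)) (fun i => ((i+1 : ℕ) : ZMod p)) hj
    rw [← h1, mul_assoc, mul_inv_cancel₀ (hne j hj), mul_one]
  rw [Finset.sum_congr rfl hterm, ← Finset.mul_sum, sum_inv_zero hp hp5, mul_zero]

private lemma Qfact {p : ℕ} (hp : p.Prime) (hp5 : 5 ≤ p) (c : ℕ) :
    ((∏ j ∈ range (p-1), (c*p+j+1) : ℕ) : ZMod (p^2)) = ((Nat.factorial (p-1) : ℕ) : ZMod (p^2)) := by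
  have hx : ((c*p : ℕ) : ZMod (p^2)) * ((c*p : ℕ) : ZMod (p^2)) = 0 := by
    push_cast
    have : ((p : ZMod (p^2)) * (p : ZMod (p^2))) = 0 := by
      rw [← Nat.cast_mul, ← sq, ZMod.natCast_self]
    linear_combination ((c : ZMod (p^2)) * (c : ZMod (p^2))) * this
  rw [Nat.cast_prod]
  have hsplit : ∀ j ∈ range (p-1), ((c*p+j+1 : ℕ) : ZMod (p^2))
      = ((j+1 : ℕ) : ZMod (p^2)) + ((c*p : ℕ) : ZMod (p^2)) := by
    intro j _; push_cast; ring
  rw [Finset.prod_congr rfl hsplit]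
  rw [prod_add_nilp _ hx]
  have hT : ((c*p : ℕ) : ZMod (p^2)) * (∑ j ∈ range (p-1), ∏ i ∈ (range (p-1)).erase j, ((i+1:ℕ) : ZMod (p^2))) = 0 := by
    rw [Nat.cast_mul, mul_comm ((c:ℕ) : ZMod (p^2)) ((p:ℕ) : ZMod (p^2)), mul_assoc]
    have hz' : (ZMod.castHom (hdvd p) (ZMod p))
        ((c : ZMod (p^2)) * ∑ j ∈ range (p-1), ∏ i ∈ (range (p-1)).erase j, ((i+1:ℕ) : ZMod (p^2))) = 0 := by
      rw [map_mul, map_sum]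
      have : ∀ j ∈ range (p-1), (ZMod.castHom (hdvd p) (ZMod p)) (∏ i ∈ (range (p-1)).erase j, ((i+1:ℕ) : ZMod (p^2)))
          = ∏ i ∈ (range (p-1)).erase j, ((i+1 : ℕ) : ZMod p) := by
        intro j _
        rw [map_prod]
        apply Finset.prod_congr rfl
        intro i _
        rw [map_natCast]
      rw [Finset.sum_congr rfl this, Tbar_zero hp hp5, mul_zero]
    exact pz hp _ hz'
  rw [hT, add_zero]
  rw [← Nat.cast_prod]
  congr 1
  exact Finset.prod_range_add_one_eq_factorial (p-1)

private lemma fact_add : ∀ (b a : ℕ), Nat.factorial (a+b) = Nat.factorial a * ∏ j ∈ range b, (a+j+1)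
  | 0, a => by simp
  | (b+1), a => by
    rw [Finset.prod_range_succ, ← Nat.add_assoc, Nat.factorial_succ, fact_add b a]
    ring

private lemma factDecomp {p : ℕ} (hp : p.Prime) :
    ∀ A : ℕ, Nat.factorial (A*p) = Nat.factorial A * p^A * ∏ i ∈ range A, ∏ j ∈ range (p-1), (i*p+j+1) := by
  have hppos : 1 ≤ p := hp.one_lt.le
  intro A
  induction A with
  | zero => simp
  | succ A ih =>
    have h1 : (A+1)*p = A*p + p := by ring
    rw [h1, fact_add p (A*p), ih]
    have h2 : ∏ j ∈ range p, (A*p+j+1) = (∏ j ∈ range (p-1), (A*p+j+1)) * ((A+1)*p) := by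
      have hps := Finset.prod_range_succ (fun j => A*p+j+1) (p-1)
      rw [show p-1+1 = p from by omega] at hps
      rw [hps]
      have harg : A*p+(p-1)+1 = (A+1)*p := by
        rw [add_assoc, show p-1+1 = p from by omega]
        ring
      rw [harg]
    rw [h2, Finset.prod_range_succ]
    rw [Nat.factorial_succ]
    ring

private lemma chooseLucas {p : ℕ} (hp : p.Prime) (hp5 : 5 ≤ p) (A B : ℕ) (hBA : B ≤ A) :
    (((A*p).choose (B*p) : ℕ) : ZMod (p^2)) = ((A.choose B : ℕ) : ZMod (p^2)) := by
  have hBpA : B*p ≤ A*p := Nat.mul_le_mul_right p hBA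
  have hc := Nat.choose_mul_factorial_mul_factorial hBpA
  have hsub : A*p - B*p = (A-B)*p := by rw [Nat.sub_mul]
  rw [hsub] at hc
  have hc2 := Nat.choose_mul_factorial_mul_factorial hBA
  -- ℕ-level reduced identity
  set Q : ℕ → ℕ := fun i => ∏ j ∈ range (p-1), (i*p+j+1) with hQ
  have hkey : (A*p).choose (B*p) * ((∏ i ∈ range B, Q i) * ∏ i ∈ range (A-B), Q i)
      = A.choose B * ∏ i ∈ range A, Q i := by
    apply Nat.eq_of_mul_eq_mul_left (show 0 < Nat.factorial B * Nat.factorial (A-B) * p^A by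
      positivity)
    calc Nat.factorial B * Nat.factorial (A-B) * p^A * ((A*p).choose (B*p) * ((∏ i ∈ range B, Q i) * ∏ i ∈ range (A-B), Q i))
        = (A*p).choose (B*p) * (Nat.factorial B * p^B * ∏ i ∈ range B, Q i)
            * (Nat.factorial (A-B) * p^(A-B) * ∏ i ∈ range (A-B), Q i) := by
          rw [show p^A = p^B * p^(A-B) by rw [← pow_add]; congr 1; omega]
          ring
      _ = Nat.factorial (A*p) := by rw [← factDecomp hp B, ← factDecomp hp (A-B)]; rw [← hc]
      _ = Nat.factorial A * p^A * ∏ i ∈ range A, Q i := factDecomp hp A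
      _ = Nat.factorial B * Nat.factorial (A-B) * p^A * (A.choose B * ∏ i ∈ range A, Q i) := by rw [← hc2]; ring
  -- cast to ZMod p²
  have hcast := congrArg (fun n : ℕ => (n : ZMod (p^2))) hkey
  simp only [Nat.cast_mul] at hcast
  have hQcast : ∀ X : ℕ, ((∏ i ∈ range X, Q i : ℕ) : ZMod (p^2)) = ((Nat.factorial (p-1) : ℕ) : ZMod (p^2))^X := by
    intro X
    rw [Nat.cast_prod]
    rw [Finset.prod_congr rfl (fun i _ => Qfact hp hp5 i)]
    rw [Finset.prod_const, Finset.card_range]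
  rw [hQcast B, hQcast (A-B), hQcast A] at hcast
  have hunit : IsUnit (((Nat.factorial (p-1) : ℕ) : ZMod (p^2))^A) := by
    apply IsUnit.pow
    apply unit_of_red hp
    intro h0
    have := (ZMod.natCast_eq_zero_iff _ _).mp h0
    have := (Nat.Prime.dvd_factorial hp).mp this
    omega
  apply hunit.mul_left_cancel
  rw [show ((Nat.factorial (p-1) : ℕ) : ZMod (p^2))^A = ((Nat.factorial (p-1) : ℕ) : ZMod (p^2))^B * ((Nat.factorial (p-1) : ℕ) : ZMod (p^2))^(A-B) by
    rw [← pow_add]; congr 1; omega]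
  calc _ = (((A*p).choose (B*p) : ℕ) : ZMod (p^2)) * (((Nat.factorial (p-1) : ℕ) : ZMod (p^2))^B * ((Nat.factorial (p-1) : ℕ) : ZMod (p^2))^(A-B)) := by ring
    _ = ((A.choose B : ℕ) : ZMod (p^2)) * ((Nat.factorial (p-1) : ℕ) : ZMod (p^2))^A := hcast
    _ = _ := by
      rw [show ((Nat.factorial (p-1) : ℕ) : ZMod (p^2))^A = ((Nat.factorial (p-1) : ℕ) : ZMod (p^2))^B * ((Nat.factorial (p-1) : ℕ) : ZMod (p^2))^(A-B) by
        rw [← pow_add]; congr 1; omega]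
      ring

private lemma stepProd : ∀ (f n m : ℕ), m + f ≤ n →
    n.choose (m+f) * ∏ j ∈ range f, (m+j+1) = n.choose m * ∏ j ∈ range f, (n - m - j)
  | 0, n, m, _ => by simp
  | (f+1), n, m, h => by
    have ih := stepProd f n m (by omega)
    rw [Finset.prod_range_succ, Finset.prod_range_succ]
    have h1 : n.choose (m+(f+1)) * (m+f+1) = n.choose (m+f) * (n - (m+f)) := by
      have := Nat.choose_succ_right_eq n (m+f)
      rw [show m+(f+1) = (m+f)+1 from by omega]
      exact this
    calc n.choose (m+(f+1)) * ((∏ j ∈ range f, (m+j+1)) * (m+f+1))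
        = (n.choose (m+(f+1)) * (m+f+1)) * ∏ j ∈ range f, (m+j+1) := by ring
      _ = (n.choose (m+f) * (n - (m+f))) * ∏ j ∈ range f, (m+j+1) := by rw [h1]
      _ = (n.choose (m+f) * ∏ j ∈ range f, (m+j+1)) * (n - (m+f)) := by ring
      _ = (n.choose m * ∏ j ∈ range f, (n - m - j)) * (n - (m+f)) := by rw [ih]
      _ = n.choose m * ((∏ j ∈ range f, (n - m - j)) * (n - m - f)) := by
          rw [Nat.sub_sub]; ring

private lemma chooseLucasModP {p : ℕ} (hp : p.Prime) (hp5 : 5 ≤ p) (A B : ℕ) (hBA : B ≤ A) :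
    (((A*p).choose (B*p) : ℕ) : ZMod p) = ((A.choose B : ℕ) : ZMod p) := by
  have := congrArg (ZMod.castHom (hdvd p) (ZMod p)) (chooseLucas hp hp5 A B hBA)
  rwa [map_natCast, map_natCast] at this

/-- Main mixed-digit congruence mod p². -/
private lemma chooseMixed {p : ℕ} (hp : p.Prime) (hp5 : 5 ≤ p) (r e f : ℕ)
    (her : e < r) (hf1 : 1 ≤ f) (hf : f ≤ p - 1) :
    ((((2*r)*p).choose ((r+e)*p + f) : ℕ) : ZMod (p^2))
      = (((r-e) * ((2*r).choose (r+e)) : ℕ) : ZMod (p^2)) * ((p.choose f : ℕ) : ZMod (p^2)) := by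
  haveI : Fact p.Prime := ⟨hp⟩
  have hppos : 1 ≤ p := hp.one_lt.le
  have hfp : f < p := by omega
  set A : ℕ := 2*r with hA
  set m : ℕ := (r+e)*p with hm
  have hle : m + f ≤ A*p := by
    have h1 : (r+e+1) * p ≤ A * p := Nat.mul_le_mul_right p (by omega)
    have : m + f < m + p := by omega
    have h2 : m + p = (r+e+1)*p := by ring
    omega
  have hP1 := stepProd f (A*p) m hle
  have hP2 := stepProd f p 0 (by omega)
  simp only [Nat.zero_add, zero_add] at hP2
  have hP2fix : ∏ j ∈ range f, (p - 0 - j) = ∏ j ∈ range f, (p - j) :=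
    Finset.prod_congr rfl (fun j _ => by omega)
  rw [Nat.choose_zero_right, one_mul, hP2fix] at hP2
  -- rewrite subtraction arguments
  have hsubarg : ∀ j : ℕ, A*p - m - j = (r-e)*p - j := by
    intro j
    have : A*p - m = (r-e)*p := by
      rw [hm, hA, ← Nat.sub_mul]
      congr 1
      omega
    omega
  rw [Finset.prod_congr rfl (fun j _ => hsubarg j)] at hP1
  -- peel the p-divisible factor
  have hpeel1 : ∏ j ∈ range f, ((r-e)*p - j)
      = (∏ j ∈ range (f-1), ((r-e)*p - (j+1))) * ((r-e)*p) := by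
    have := Finset.prod_range_succ' (fun j => (r-e)*p - j) (f-1)
    rw [show f-1+1 = f from by omega] at this
    rw [this, Nat.sub_zero]
  have hpeel2 : ∏ j ∈ range f, (p - j)
      = (∏ j ∈ range (f-1), (p - (j+1))) * p := by
    have := Finset.prod_range_succ' (fun j => p - j) (f-1)
    rw [show f-1+1 = f from by omega] at this
    rw [this, Nat.sub_zero]
  rw [hpeel1] at hP1
  rw [hpeel2] at hP2
  set U1 : ℕ := ∏ j ∈ range f, (m+j+1) with hU1
  set U2 : ℕ := ∏ j ∈ range f, (j+1) with hU2
  set Q : ℕ := ∏ j ∈ range (f-1), ((r-e)*p - (j+1)) with hQd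
  set Q' : ℕ := ∏ j ∈ range (f-1), (p - (j+1)) with hQ'd
  -- units
  have hured : ((U1 : ℕ) : ZMod p) = ((U2 : ℕ) : ZMod p) := by
    rw [hU1, hU2, Nat.cast_prod, Nat.cast_prod]
    apply Finset.prod_congr rfl
    intro j _
    have : ((m + j + 1 : ℕ) : ZMod p) = ((m : ℕ) : ZMod p) + ((j+1 : ℕ) : ZMod p) := by push_cast; ring
    rw [this, hm]
    have : (((r+e)*p : ℕ) : ZMod p) = 0 := by
      rw [Nat.cast_mul, ZMod.natCast_self, mul_zero]
    rw [this, zero_add]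
  have hU2fact : U2 = Nat.factorial f := by
    rw [hU2]; exact Finset.prod_range_add_one_eq_factorial f
  have hU2red : ((U2 : ℕ) : ZMod p) ≠ 0 := by
    rw [hU2fact]
    intro h0
    have hd := (ZMod.natCast_eq_zero_iff _ _).mp h0
    have := (Nat.Prime.dvd_factorial hp).mp hd
    omega
  have hunit : IsUnit (((U1 * U2 : ℕ)) : ZMod (p^2)) := by
    apply unit_of_red hp
    rw [Nat.cast_mul, hured]
    exact fun h0 => hU2red (by
      rcases mul_eq_zero.mp h0 with h | h
      · exact h
      · exact h)
  -- the two sides after multiplying by U1*U2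
  apply hunit.mul_right_cancel
  have cast1 : (((A*p).choose (m+f) : ℕ) : ZMod (p^2)) * ((U1*U2 : ℕ) : ZMod (p^2))
      = (((A*p).choose m * (Q * ((r-e)*p)) * U2 : ℕ) : ZMod (p^2)) := by
    have hc1 := congrArg (fun n : ℕ => (n : ZMod (p^2))) hP1
    push_cast at hc1 ⊢
    linear_combination ((U2 : ℕ) : ZMod (p^2)) * hc1
  have cast2 : ((((r-e) * ((2*r).choose (r+e)) : ℕ)) : ZMod (p^2)) * ((p.choose f : ℕ) : ZMod (p^2)) * ((U1*U2 : ℕ) : ZMod (p^2))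
      = ((((r-e) * ((2*r).choose (r+e))) * (Q' * p) * U1 : ℕ) : ZMod (p^2)) := by
    have hc2 := congrArg (fun n : ℕ => (n : ZMod (p^2))) hP2
    push_cast at hc2 ⊢
    linear_combination (((r-e : ℕ) : ZMod (p^2)) * (((2*r).choose (r+e) : ℕ) : ZMod (p^2)) * ((U1 : ℕ) : ZMod (p^2))) * hc2
  rw [cast1, cast2]
  -- both sides are p * (something); compare mod p
  have lhs_form : ((A*p).choose m * (Q * ((r-e)*p)) * U2 : ℕ)
      = p * ((A*p).choose m * Q * (r-e) * U2) := by ring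
  have rhs_form : (((r-e) * ((2*r).choose (r+e))) * (Q' * p) * U1 : ℕ)
      = p * ((r-e) * ((2*r).choose (r+e)) * Q' * U1) := by ring
  rw [lhs_form, rhs_form,
    Nat.cast_mul p ((A*p).choose m * Q * (r-e) * U2),
    Nat.cast_mul p ((r-e) * ((2*r).choose (r+e)) * Q' * U1)]
  apply pmul_nat hp
  -- mod p equality
  have hQred : ((Q : ℕ) : ZMod p) = ((Q' : ℕ) : ZMod p) := by
    rw [hQd, hQ'd, Nat.cast_prod, Nat.cast_prod]
    apply Finset.prod_congr rfl
    intro j hj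
    have hjf : j < f - 1 := Finset.mem_range.mp hj
    have hj1 : j + 1 ≤ p := by omega
    have hj2 : j + 1 ≤ (r-e)*p := by
      have : 1*p ≤ (r-e)*p := Nat.mul_le_mul_right p (by omega)
      omega
    rw [Nat.cast_sub hj1, Nat.cast_sub hj2]
    have h1 : (((r-e)*p : ℕ) : ZMod p) = 0 := by rw [Nat.cast_mul, ZMod.natCast_self, mul_zero]
    have h2 : ((p : ℕ) : ZMod p) = 0 := ZMod.natCast_self p
    rw [h1, h2]
  have hLred := chooseLucasModP hp hp5 A (r+e) (by omega)
  have hmm : (A*p).choose m = (A*p).choose ((r+e)*p) := by rw [hm]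
  push_cast
  rw [hmm]
  push_cast at hLred hQred hured
  rw [hLred, hQred, hured]
  ring

private lemma chi3shift {p : ℕ} (h3 : p % 3 = 1 ∨ p % 3 = 2) (c : ℕ) :
    chi c + chi (c+p) + chi (c+2*p) = 0 := by
  rcases h3 with h | h
  · have e1 : chi (c+p) = chi (c+1) := chi_eq_of_mod (by omega)
    have e2 : chi (c+2*p) = chi (c+2) := chi_eq_of_mod (by omega)
    rw [e1, e2]
    exact chi_sum3 c
  · have e1 : chi (c+p) = chi (c+2) := chi_eq_of_mod (by omega)
    have e2 : chi (c+2*p) = chi (c+1) := chi_eq_of_mod (by omega)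
    rw [e1, e2]
    linarith [chi_sum3 c]

private lemma sumChiChooseP {p : ℕ} (hp : p.Prime) (hp5 : 5 ≤ p) (c : ℕ) :
    ∑ j ∈ range (p-1), chi (c+(j+1)) * (p.choose (j+1) : ℤ) = 0 := by
  have hodd : Odd p := hp.odd_of_ne_two (by omega)
  have h3 : p % 3 = 1 ∨ p % 3 = 2 := by
    have : ¬ (3 ∣ p) := by
      intro hd
      rcases (Nat.Prime.eq_one_or_self_of_dvd hp 3 hd) with h | h <;> omega
    omega
  have hfull := chiBinom p c
  rw [Odd.neg_one_pow hodd] at hfull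
  rw [Finset.sum_range_succ' (fun f => chi (c+f) * (p.choose f : ℤ)) p] at hfull
  have hsplit : ∑ j ∈ range p, chi (c+(j+1)) * (p.choose (j+1) : ℤ)
      = (∑ j ∈ range (p-1), chi (c+(j+1)) * (p.choose (j+1) : ℤ))
        + chi (c+p) * (p.choose p : ℤ) := by
    have hsr := Finset.sum_range_succ (fun j => chi (c+(j+1)) * (p.choose (j+1) : ℤ)) (p-1)
    rw [show p-1+1 = p from by omega] at hsr
    rw [hsr]
  rw [hsplit] at hfull
  simp only [Nat.choose_self, Nat.choose_zero_right, Nat.cast_one, mul_one, add_zero] at hfull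
  have := chi3shift h3 c
  linarith [hfull, this]

private lemma sum_range_mul {M : Type*} [AddCommMonoid M] (p : ℕ) (g : ℕ → M) :
    ∀ r : ℕ, ∑ i ∈ range (r*p), g i = ∑ e ∈ range r, ∑ j ∈ range p, g (e*p+j) := by
  intro r
  induction r with
  | zero => simp
  | succ r ih =>
    rw [show (r+1)*p = r*p + p from by ring, Finset.sum_range_add, ih, Finset.sum_range_succ]

theorem sum_centralBinom_rp_mod_p_sq (p : ℕ) (hp : p.Prime) (hp5 : 5 ≤ p)
    (r : ℕ) (hr : 0 < r) :
    (p % 3 = 1 → (∑ n ∈ Finset.range (r * p), (Nat.centralBinom n : ZMod (p ^ 2))) =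
      ∑ n ∈ Finset.range r, (Nat.centralBinom n : ZMod (p ^ 2))) ∧
    (p % 3 = 2 → (∑ n ∈ Finset.range (r * p), (Nat.centralBinom n : ZMod (p ^ 2))) =
      -∑ n ∈ Finset.range r, (Nat.centralBinom n : ZMod (p ^ 2))) := by
  have hppos : 1 ≤ p := hp.one_lt.le
  -- main congruence
  have key : (∑ n ∈ Finset.range (r * p), (((2*n).choose n : ℕ) : ZMod (p^2)))
      = ((chi p : ℤ) : ZMod (p^2)) * ∑ n ∈ Finset.range r, (((2*n).choose n : ℕ) : ZMod (p^2)) := by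
    have h0 : (∑ n ∈ Finset.range (r * p), (((2*n).choose n : ℕ) : ZMod (p^2)))
        = (((∑ n ∈ range (r*p), ((2*n).choose n : ℤ)) : ℤ) : ZMod (p^2)) := by
      push_cast
      rfl
    rw [h0, sumS (r*p)]
    -- strip d = 0
    have h1 : ∑ d ∈ range (r*p+1), chi d * ((2*(r*p)).choose (r*p+d) : ℤ)
        = ∑ i ∈ range (r*p), chi (i+1) * ((2*(r*p)).choose (r*p+(i+1)) : ℤ) := by
      rw [Finset.sum_range_succ' (fun d => chi d * ((2*(r*p)).choose (r*p+d) : ℤ)) (r*p)]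
      simp [chi_zero]
    rw [h1]
    -- block decomposition
    rw [sum_range_mul p (fun i => chi (i+1) * ((2*(r*p)).choose (r*p+(i+1)) : ℤ)) r]
    -- cast to ZMod p²
    rw [Int.cast_sum]
    have hblock : ∀ e ∈ range r,
        ((∑ j ∈ range p, chi (e*p+j+1) * ((2*(r*p)).choose (r*p+(e*p+j+1)) : ℤ) : ℤ) : ZMod (p^2))
        = ((chi p : ℤ) : ZMod (p^2)) * ((chi (e+1) * ((2*r).choose (r+(e+1)) : ℤ) : ℤ) : ZMod (p^2)) := by
      intro e he
      have her : e < r := Finset.mem_range.mp he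
      -- split top term
      have hsp : ∑ j ∈ range p, chi (e*p+j+1) * ((2*(r*p)).choose (r*p+(e*p+j+1)) : ℤ)
          = (∑ j ∈ range (p-1), chi (e*p+j+1) * ((2*(r*p)).choose (r*p+(e*p+j+1)) : ℤ))
            + chi ((e+1)*p) * ((2*(r*p)).choose (r*p+((e+1)*p)) : ℤ) := by
        have hsr := Finset.sum_range_succ (fun j => chi (e*p+j+1) * ((2*(r*p)).choose (r*p+(e*p+j+1)) : ℤ)) (p-1)
        rw [show p-1+1 = p from by omega] at hsr
        rw [hsr]
        have hx : e*p+(p-1)+1 = (e+1)*p := by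
          have : (e+1)*p = e*p + p := by ring
          omega
        rw [hx]
      rw [hsp, Int.cast_add]
      -- inner part vanishes
      have hinner : ((∑ j ∈ range (p-1), chi (e*p+j+1) * ((2*(r*p)).choose (r*p+(e*p+j+1)) : ℤ) : ℤ) : ZMod (p^2)) = 0 := by
        rw [Int.cast_sum]
        have hterm : ∀ j ∈ range (p-1),
            ((chi (e*p+j+1) * ((2*(r*p)).choose (r*p+(e*p+j+1)) : ℤ) : ℤ) : ZMod (p^2))
            = (((r-e) * ((2*r).choose (r+e)) : ℕ) : ZMod (p^2))
              * ((chi (e*p+(j+1)) * (p.choose (j+1) : ℤ) : ℤ) : ZMod (p^2)) := by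
          intro j hj
          have hjp : j < p - 1 := Finset.mem_range.mp hj
          have hidx : r*p+(e*p+j+1) = (r+e)*p + (j+1) := by
            have : (r+e)*p = r*p + e*p := by ring
            omega
          have hnn : 2*(r*p) = (2*r)*p := by ring
          rw [Int.cast_mul, Int.cast_natCast, hidx, hnn]
          rw [chooseMixed hp hp5 r e (j+1) her (by omega) (by omega)]
          rw [Int.cast_mul, Int.cast_natCast]
          have : chi (e*p+j+1) = chi (e*p+(j+1)) := by rw [show e*p+j+1 = e*p+(j+1) from by omega]
          rw [this]
          ring
        rw [Finset.sum_congr rfl hterm, ← Finset.mul_sum]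
        have : ∑ j ∈ range (p-1), ((chi (e*p+(j+1)) * (p.choose (j+1) : ℤ) : ℤ) : ZMod (p^2))
            = ((∑ j ∈ range (p-1), chi (e*p+(j+1)) * (p.choose (j+1) : ℤ) : ℤ) : ZMod (p^2)) := by
          rw [Int.cast_sum]
        rw [this, sumChiChooseP hp hp5 (e*p), Int.cast_zero, mul_zero]
      rw [hinner, zero_add]
      -- top term
      have hidx2 : r*p+((e+1)*p) = (r+(e+1))*p := by ring
      have hnn : 2*(r*p) = (2*r)*p := by ring
      rw [Int.cast_mul, Int.cast_natCast, hidx2, hnn]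
      rw [chooseLucas hp hp5 (2*r) (r+(e+1)) (by omega)]
      rw [chi_mul (e+1) p]
      push_cast
      ring
    rw [Finset.sum_congr rfl hblock, ← Finset.mul_sum]
    congr 1
    have hz : ∑ e ∈ range r, ((chi (e+1) * ((2*r).choose (r+(e+1)) : ℤ) : ℤ) : ZMod (p^2))
        = ((∑ e ∈ range r, chi (e+1) * ((2*r).choose (r+(e+1)) : ℤ) : ℤ) : ZMod (p^2)) := by
      rw [Int.cast_sum]
    rw [hz]
    have hS : ∑ e ∈ range r, chi (e+1) * ((2*r).choose (r+(e+1)) : ℤ)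
        = ∑ n ∈ range r, ((2*n).choose n : ℤ) := by
      rw [sumS r]
      rw [Finset.sum_range_succ' (fun d => chi d * ((2*r).choose (r+d) : ℤ)) r]
      simp [chi_zero]
    rw [hS]
    push_cast
    rfl
  constructor
  · intro h3
    have hchi : chi p = 1 := by simp [chi, h3]
    rw [hchi] at key
    simp only [Nat.centralBinom]
    simpa using key
  · intro h3
    have hchi : chi p = -1 := by simp [chi, h3]
    rw [hchi] at key
    simp only [Nat.centralBinom]
    push_cast at key ⊢
    rw [key]
    ring
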